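/- Consider the random Bernoulli directed graph model on N nodes with edge probability p, and for 1 ≤ k ≤ N let q_k be the probability that the out-component of node 0 has exactly k nodes. For every M with 1 ≤ M ≤ N: (1-p)^{M(N-M)} = ∑_{k=1}^{M} q_k · ( C(M-1,k-1) / C(N-1,k-1) ) · (1-p)^{(M-k)(N-M)}, where C(n,r) denotes the binomial coefficient. -/

import Mathlib

open scoped Classical

/-- The weight (probability) of a realization `g` of the random Bernoulli directed graph
on `N` nodes: independently for each ordered pair `(u, v)` of distinct nodes, the edge
from `u` to `v` is present with probability `p`.  Self-loops never occur. -/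
noncomputable def bernWeight (N : ℕ) (p : ℝ) (g : Fin N → Fin N → Bool) : ℝ :=
  ∏ u : Fin N, ∏ v : Fin N,
    if u = v then (if g u v then 0 else 1)
    else (if g u v then p else 1 - p)

/-- Probability of an event in the random Bernoulli directed graph model. -/
noncomputable def bernProb (N : ℕ) (p : ℝ) (E : Set (Fin N → Fin N → Bool)) : ℝ :=
  ∑' g : Fin N → Fin N → Bool, Set.indicator E (bernWeight N p) g

/-- The out-component of node `0`: the set of nodes reachable from node `0`
(including node `0` itself) following directed edges. -/
def bernOutComp (N : ℕ) (hN : 0 < N) (g : Fin N → Fin N → Bool) : Set (Fin N) :=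
  {v | Relation.ReflTransGen (fun a b => g a b = true) ⟨0, hN⟩ v}

/-- `bernQProb N hN p k` is the probability that the out-component of node `0` has
exactly `k` nodes. -/
noncomputable def bernQProb (N : ℕ) (hN : 0 < N) (p : ℝ) (k : ℕ) : ℝ :=
  bernProb N p {g | (bernOutComp N hN g).ncard = k}

section Infra
variable (N : ℕ) (p : ℝ)

noncomputable def hW (c : Fin N × Fin N) (b : Bool) : ℝ :=
  if c.1 = c.2 then (if b then 0 else 1) else (if b then p else 1 - p)

variable (q : Fin N × Fin N → Prop) [DecidablePred q]

/-- merge values on q-coordinates and non-q-coordinates into a graph -/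
def mergeG (a : {c : Fin N × Fin N // q c} → Bool) (b : {c : Fin N × Fin N // ¬ q c} → Bool) :
    Fin N → Fin N → Bool :=
  fun u v => if h : q (u, v) then a ⟨(u, v), h⟩ else b ⟨(u, v), h⟩

lemma sum_merge (F : (Fin N → Fin N → Bool) → ℝ) :
    ∑ g : Fin N → Fin N → Bool, F g
      = ∑ a : {c : Fin N × Fin N // q c} → Bool,
          ∑ b : {c : Fin N × Fin N // ¬ q c} → Bool, F (mergeG N q a b) := by
  have hbij : Function.Bijective
      (fun ab : ({c : Fin N × Fin N // q c} → Bool) × ({c : Fin N × Fin N // ¬ q c} → Bool) =>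
        mergeG N q ab.1 ab.2) := by
    constructor
    · intro x y hxy
      ext c
      · have := congrFun (congrFun hxy c.1.1) c.1.2
        simpa [mergeG, c.2] using this
      · have := congrFun (congrFun hxy c.1.1) c.1.2
        simpa [mergeG, c.2] using this
    · intro g
      refine ⟨⟨fun c => g c.1.1 c.1.2, fun c => g c.1.1 c.1.2⟩, ?_⟩
      funext u v
      by_cases h : q (u, v) <;> simp [mergeG, h]
  rw [← Fintype.sum_prod_type (f := fun ab : ({c : Fin N × Fin N // q c} → Bool) × ({c : Fin N × Fin N // ¬ q c} → Bool) => F (mergeG N q ab.1 ab.2))]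
  exact (Fintype.sum_bijective _ hbij
    (fun ab : ({c : Fin N × Fin N // q c} → Bool) × ({c : Fin N × Fin N // ¬ q c} → Bool) =>
      F (mergeG N q ab.1 ab.2)) F (fun ab => rfl)).symm

lemma weight_merge (a : {c : Fin N × Fin N // q c} → Bool)
    (b : {c : Fin N × Fin N // ¬ q c} → Bool) :
    (∏ c : Fin N × Fin N, hW N p c ((mergeG N q a b) c.1 c.2))
      = (∏ c : {c : Fin N × Fin N // q c}, hW N p c.1 (a c)) *
        (∏ c : {c : Fin N × Fin N // ¬ q c}, hW N p c.1 (b c)) := by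
  rw [← Fintype.prod_subtype_mul_prod_subtype q (fun c => hW N p c ((mergeG N q a b) c.1 c.2))]
  congr 1
  · apply Finset.prod_congr rfl
    intro c _
    congr 1
    simp [mergeG, c.2]
  · apply Finset.prod_congr rfl
    intro c _
    congr 1
    simp [mergeG, c.2]

lemma sum_prod_one :
    ∑ a : {c : Fin N × Fin N // q c} → Bool,
        ∏ c : {c : Fin N × Fin N // q c}, hW N p c.1 (a c) = 1 := by
  classical
  have h1 := Finset.prod_univ_sum (fun _ : {c : Fin N × Fin N // q c} => (Finset.univ : Finset Bool))
      (fun c b => hW N p c.1 b)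
  rw [Fintype.piFinset_univ] at h1
  rw [← h1]
  rw [Finset.prod_eq_one]
  intro c _
  rw [show ∑ b : Bool, hW N p c.1 b = hW N p c.1 true + hW N p c.1 false from by
    simp [Fintype.sum_bool]]
  unfold hW; split <;> simp




lemma mergeG_apply_q (a : {c : Fin N × Fin N // q c} → Bool)
    (b : {c : Fin N × Fin N // ¬ q c} → Bool) {u v : Fin N} (h : q (u, v)) :
    mergeG N q a b u v = a ⟨(u, v), h⟩ := dif_pos h

lemma mergeG_apply_nq (a : {c : Fin N × Fin N // q c} → Bool)
    (b : {c : Fin N × Fin N // ¬ q c} → Bool) {u v : Fin N} (h : ¬ q (u, v)) :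
    mergeG N q a b u v = b ⟨(u, v), h⟩ := dif_neg h

lemma cond_split
    (hq : ∀ c, q c → c.1 ≠ c.2)
    (P : (Fin N → Fin N → Bool) → Prop)
    (hP : ∀ g g', (∀ u v, ¬ q (u, v) → g u v = g' u v) → (P g ↔ P g')) :
    ∑ g : Fin N → Fin N → Bool,
        (if P g ∧ (∀ u v, q (u, v) → g u v = false)
          then ∏ c : Fin N × Fin N, hW N p c (g c.1 c.2) else 0)
      = (1 - p) ^ (Fintype.card {c : Fin N × Fin N // q c}) *
        ∑ g : Fin N → Fin N → Bool,
          (if P g then ∏ c : Fin N × Fin N, hW N p c (g c.1 c.2) else 0) := by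
  have hmergeP : ∀ a a' b, P (mergeG N q a b) ↔ P (mergeG N q a' b) := by
    intro a a' b
    apply hP
    intro u v h
    simp only [mergeG, dif_neg h]
  have hcard : (∏ c : {c : Fin N × Fin N // q c}, hW N p c.1 false)
      = (1 - p) ^ (Fintype.card {c : Fin N × Fin N // q c}) := by
    rw [Finset.prod_congr rfl (fun c _ => show hW N p c.1 false = 1 - p from by
      simp [hW, hq c.1 c.2])]
    rw [Finset.prod_const, Finset.card_univ]
  have key : ∀ (a : {c : Fin N × Fin N // q c} → Bool) (b : {c : Fin N × Fin N // ¬ q c} → Bool),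
      (if P (mergeG N q a b) ∧ (∀ u v, q (u, v) → mergeG N q a b u v = false)
        then ∏ c : Fin N × Fin N, hW N p c ((mergeG N q a b) c.1 c.2) else 0)
      = ((if a = fun _ => false then 1 else 0) *
          ∏ c : {c : Fin N × Fin N // q c}, hW N p c.1 (a c)) *
        ((if P (mergeG N q (fun _ => false) b) then 1 else 0) *
          ∏ c : {c : Fin N × Fin N // ¬ q c}, hW N p c.1 (b c)) := by
    intro a b
    rw [weight_merge]
    by_cases ha : a = fun _ => false
    · subst ha
      by_cases hPb : P (mergeG N q (fun _ => false) b)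
      · rw [if_pos ⟨hPb, fun u v h => mergeG_apply_q N q _ b h⟩, if_pos rfl, if_pos hPb]
        ring
      · rw [if_neg (fun h => hPb h.1), if_neg hPb]
        ring
    · rw [if_neg, if_neg ha]
      · ring
      · rintro ⟨-, h2⟩
        apply ha
        funext c
        have h3 := h2 c.1.1 c.1.2 (by simpa using c.2)
        rwa [mergeG_apply_q N q a b (by simpa using c.2)] at h3
  have key2 : ∀ (a : {c : Fin N × Fin N // q c} → Bool) (b : {c : Fin N × Fin N // ¬ q c} → Bool),
      (if P (mergeG N q a b)
        then ∏ c : Fin N × Fin N, hW N p c ((mergeG N q a b) c.1 c.2) else 0)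
      = (∏ c : {c : Fin N × Fin N // q c}, hW N p c.1 (a c)) *
        ((if P (mergeG N q (fun _ => false) b) then 1 else 0) *
          ∏ c : {c : Fin N × Fin N // ¬ q c}, hW N p c.1 (b c)) := by
    intro a b
    rw [weight_merge]
    by_cases hPb : P (mergeG N q (fun _ => false) b)
    · rw [if_pos ((hmergeP (fun _ => false) a b).mp hPb), if_pos hPb]; ring
    · rw [if_neg (fun h => hPb ((hmergeP a (fun _ => false) b).mp h)), if_neg hPb]; ring
  have hsingle : ∑ a : {c : Fin N × Fin N // q c} → Bool,
      ((if a = fun _ => false then (1:ℝ) else 0) *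
        ∏ c : {c : Fin N × Fin N // q c}, hW N p c.1 (a c))
      = ∏ c : {c : Fin N × Fin N // q c}, hW N p c.1 false := by
    rw [Finset.sum_eq_single (fun _ => false)]
    · simp
    · intro a _ ha; simp [ha]
    · intro h; exact absurd (Finset.mem_univ _) h
  calc ∑ g : Fin N → Fin N → Bool,
        (if P g ∧ (∀ u v, q (u, v) → g u v = false)
          then ∏ c : Fin N × Fin N, hW N p c (g c.1 c.2) else 0)
      = ∑ a : {c : Fin N × Fin N // q c} → Bool,
          ∑ b : {c : Fin N × Fin N // ¬ q c} → Bool,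
            (if P (mergeG N q a b) ∧ (∀ u v, q (u, v) → mergeG N q a b u v = false)
              then ∏ c : Fin N × Fin N, hW N p c ((mergeG N q a b) c.1 c.2) else 0) :=
        sum_merge N q _
    _ = ∑ a : {c : Fin N × Fin N // q c} → Bool,
          ((if a = fun _ => false then 1 else 0) *
            ∏ c : {c : Fin N × Fin N // q c}, hW N p c.1 (a c)) *
          ∑ b : {c : Fin N × Fin N // ¬ q c} → Bool,
            ((if P (mergeG N q (fun _ => false) b) then 1 else 0) *
              ∏ c : {c : Fin N × Fin N // ¬ q c}, hW N p c.1 (b c)) := by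
        refine Finset.sum_congr rfl fun a _ => ?_
        rw [Finset.mul_sum]
        exact Finset.sum_congr rfl fun b _ => key a b
    _ = (∏ c : {c : Fin N × Fin N // q c}, hW N p c.1 false) *
          ∑ b : {c : Fin N × Fin N // ¬ q c} → Bool,
            ((if P (mergeG N q (fun _ => false) b) then 1 else 0) *
              ∏ c : {c : Fin N × Fin N // ¬ q c}, hW N p c.1 (b c)) := by
        rw [← Finset.sum_mul, hsingle]
    _ = (1 - p) ^ (Fintype.card {c : Fin N × Fin N // q c}) *
          ((∑ a : {c : Fin N × Fin N // q c} → Bool,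
              ∏ c : {c : Fin N × Fin N // q c}, hW N p c.1 (a c)) *
            ∑ b : {c : Fin N × Fin N // ¬ q c} → Bool,
              ((if P (mergeG N q (fun _ => false) b) then 1 else 0) *
                ∏ c : {c : Fin N × Fin N // ¬ q c}, hW N p c.1 (b c))) := by
        rw [sum_prod_one, hcard]; ring
    _ = (1 - p) ^ (Fintype.card {c : Fin N × Fin N // q c}) *
          ∑ a : {c : Fin N × Fin N // q c} → Bool,
            ∑ b : {c : Fin N × Fin N // ¬ q c} → Bool,
              (if P (mergeG N q a b)
                then ∏ c : Fin N × Fin N, hW N p c ((mergeG N q a b) c.1 c.2) else 0) := by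
        congr 1
        rw [Finset.sum_mul]
        refine Finset.sum_congr rfl fun a _ => ?_
        rw [Finset.mul_sum]
        exact Finset.sum_congr rfl fun b _ => (key2 a b).symm
    _ = (1 - p) ^ (Fintype.card {c : Fin N × Fin N // q c}) *
          ∑ g : Fin N → Fin N → Bool,
            (if P g then ∏ c : Fin N × Fin N, hW N p c (g c.1 c.2) else 0) := by
        rw [← sum_merge N q (fun g => if P g then ∏ c : Fin N × Fin N, hW N p c (g c.1 c.2) else 0)]

end Infra

section CompLemmas
variable {N : ℕ} (hN : 0 < N)

lemma zero_mem_comp (g : Fin N → Fin N → Bool) : (⟨0, hN⟩ : Fin N) ∈ bernOutComp N hN g :=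
  Relation.ReflTransGen.refl

lemma comp_closed {g : Fin N → Fin N → Bool} {u v : Fin N}
    (hu : u ∈ bernOutComp N hN g) (he : g u v = true) : v ∈ bernOutComp N hN g :=
  Relation.ReflTransGen.tail hu he

/-- if comp g = S and g, g' agree on rows in S, then comp g' = S -/
lemma comp_congr {g g' : Fin N → Fin N → Bool} {S : Set (Fin N)}
    (hS : bernOutComp N hN g = S)
    (hagree : ∀ u ∈ S, ∀ v, g u v = g' u v) :
    bernOutComp N hN g' = S := by
  apply Set.eq_of_subset_of_subset
  · intro v hv
    induction hv with
    | refl => rw [← hS]; exact zero_mem_comp hN g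
    | @tail b c _ e ih =>
        rw [← hS]
        exact comp_closed hN (hS ▸ ih : _) ((hagree b ih c).trans e)
  · rw [← hS]
    intro v hv
    induction hv with
    | refl => exact zero_mem_comp hN g'
    | @tail b c hb e ih =>
        have hbS : b ∈ S := hS ▸ hb
        exact comp_closed hN ih ((hagree b hbS c).symm.trans e)

/-- If there are no edges from A to outside A and 0 ∈ A, the component is inside A. -/
lemma comp_subset {g : Fin N → Fin N → Bool} {A : Set (Fin N)}
    (h0 : (⟨0, hN⟩ : Fin N) ∈ A)
    (hA : ∀ u ∈ A, ∀ v, v ∉ A → g u v = false) :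
    bernOutComp N hN g ⊆ A := by
  intro v hv
  induction hv with
  | refl => exact h0
  | @tail b c hb e ih =>
      by_contra hc
      rw [hA b ih c hc] at e
      exact Bool.false_ne_true (e)

/-- component has no outgoing edges -/
lemma comp_no_out {g : Fin N → Fin N → Bool} {u v : Fin N}
    (hu : u ∈ bernOutComp N hN g) (hv : v ∉ bernOutComp N hN g) : g u v = false := by
  by_contra h
  exact hv (comp_closed hN hu (by simpa using h))

/-- permutation action on components -/
lemma comp_perm (σ : Equiv.Perm (Fin N)) (hσ : σ ⟨0, hN⟩ = ⟨0, hN⟩)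
    (g : Fin N → Fin N → Bool) (v : Fin N) :
    v ∈ bernOutComp N hN (fun u v => g (σ u) (σ v)) ↔ σ v ∈ bernOutComp N hN g := by
  constructor
  · intro hv
    induction hv with
    | refl => rw [hσ]; exact zero_mem_comp hN g
    | @tail b c _ e ih => exact comp_closed hN ih e
  · intro hv
    have key : ∀ w, w ∈ bernOutComp N hN g → σ.symm w ∈ bernOutComp N hN (fun u v => g (σ u) (σ v)) := by
      intro w hw
      induction hw with
      | refl =>
          have : σ.symm ⟨0, hN⟩ = ⟨0, hN⟩ := by
            apply σ.injective; rw [Equiv.apply_symm_apply, hσ]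
          rw [this]; exact zero_mem_comp hN _
      | @tail b c hb e ih =>
          refine comp_closed hN ih ?_
          show g (σ (σ.symm b)) (σ (σ.symm c)) = true
          rwa [Equiv.apply_symm_apply, Equiv.apply_symm_apply]
    have := key (σ v) hv
    rwa [Equiv.symm_apply_apply] at this

end CompLemmas

section Sym
variable {N : ℕ} (hN : 0 < N) (p : ℝ)

/-- probability (unnormalized sum) that the component equals a given finset -/
noncomputable def pComp (S : Finset (Fin N)) : ℝ :=
  ∑ g : Fin N → Fin N → Bool,
    (if bernOutComp N hN g = ↑S then ∏ c : Fin N × Fin N, hW N p c (g c.1 c.2) else 0)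

lemma weight_perm (σ : Equiv.Perm (Fin N)) (g : Fin N → Fin N → Bool) :
    (∏ c : Fin N × Fin N, hW N p c (g (σ c.1) (σ c.2)))
      = ∏ c : Fin N × Fin N, hW N p c (g c.1 c.2) := by
  apply Fintype.prod_equiv (Equiv.prodCongr σ σ)
  intro c
  show hW N p c (g (σ c.1) (σ c.2)) = hW N p (σ c.1, σ c.2) (g (σ c.1) (σ c.2))
  unfold hW
  by_cases h : c.1 = c.2
  · simp [h]
  · rw [if_neg h, if_neg (show ¬ (σ c.1, σ c.2).1 = (σ c.1, σ c.2).2 from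
      fun hc => h (σ.injective hc))]

lemma pComp_perm (σ : Equiv.Perm (Fin N)) (hσ : σ ⟨0, hN⟩ = ⟨0, hN⟩) (S : Finset (Fin N)) :
    pComp hN p S = pComp hN p (S.image σ.symm) := by
  unfold pComp
  have hbij : Function.Bijective (fun g : Fin N → Fin N → Bool => fun u v => g (σ u) (σ v)) := by
    constructor
    · intro x y hxy
      funext u v
      have := congrFun (congrFun hxy (σ.symm u)) (σ.symm v)
      simpa [Equiv.apply_symm_apply] using this
    · intro g
      exact ⟨fun u v => g (σ.symm u) (σ.symm v), by funext u v; simp⟩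
  refine Fintype.sum_bijective _ hbij _ _ ?_
  intro g
  have hpre : bernOutComp N hN (fun u v => g (σ u) (σ v)) = σ ⁻¹' (bernOutComp N hN g) := by
    ext v
    rw [Set.mem_preimage]
    exact comp_perm hN σ hσ g v
  have hset : bernOutComp N hN (fun u v => g (σ u) (σ v)) = ↑(S.image σ.symm)
      ↔ bernOutComp N hN g = ↑S := by
    rw [hpre, Finset.coe_image, Equiv.image_eq_preimage_symm σ.symm (↑S : Set (Fin N))]
    show σ ⁻¹' _ = σ.symm.symm ⁻¹' _ ↔ _
    rw [Equiv.symm_symm]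
    exact Set.preimage_eq_preimage σ.surjective
  by_cases h : bernOutComp N hN g = ↑S
  · rw [if_pos h, if_pos (hset.mpr h)]
    exact (weight_perm p σ g).symm
  · rw [if_neg h, if_neg (fun hc => h (hset.mp hc))]

/-- any two finsets of the same cardinality containing 0 give the same pComp -/
lemma pComp_eq_of_card (S T : Finset (Fin N)) (hS : (⟨0, hN⟩ : Fin N) ∈ S)
    (hT : (⟨0, hN⟩ : Fin N) ∈ T) (hcard : S.card = T.card) :
    pComp hN p S = pComp hN p T := by
  classical
  -- build σ : Perm with σ '' T = S ... we need S.image σ.symm = T, i.e. σ maps T to S?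
  -- use subtypeCongr : e : {x // x ∈ S} ≃ {x // x ∈ T}
  have hc1 : Fintype.card {x : Fin N // x ∈ S} = Fintype.card {x : Fin N // x ∈ T} := by
    simpa [Fintype.card_coe] using hcard
  have hc2 : Fintype.card {x : Fin N // ¬ x ∈ S} = Fintype.card {x : Fin N // ¬ x ∈ T} := by
    rw [Fintype.card_subtype_compl, Fintype.card_subtype_compl, hc1]
  -- σ₀ maps S to T
  obtain ⟨e⟩ := Fintype.card_eq.mp hc1
  obtain ⟨f⟩ := Fintype.card_eq.mp hc2
  set σ₀ : Equiv.Perm (Fin N) := Equiv.subtypeCongr e f with hσ₀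
  have hσ₀S : ∀ x : Fin N, x ∈ S → σ₀ x ∈ T := by
    intro x hx
    have : σ₀ x = (e ⟨x, hx⟩ : Fin N) := by
      simp [hσ₀, Equiv.subtypeCongr, Equiv.sumCompl_symm_apply_of_pos hx]
    rw [this]; exact (e ⟨x, hx⟩).2
  have hσ₀Sc : ∀ x : Fin N, x ∉ S → σ₀ x ∉ T := by
    intro x hx
    have : σ₀ x = (f ⟨x, hx⟩ : Fin N) := by
      simp [hσ₀, Equiv.subtypeCongr, Equiv.sumCompl_symm_apply_of_neg hx]
    rw [this]; exact (f ⟨x, hx⟩).2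
  -- fix zero: τ = σ₀ followed by swap (σ₀ 0) 0 ; both in T
  set z : Fin N := ⟨0, hN⟩
  set σ : Equiv.Perm (Fin N) := σ₀.trans (Equiv.swap (σ₀ z) z) with hσdef
  have hσz : σ z = z := by simp [hσdef, Equiv.swap_apply_left]
  have hσS : ∀ x : Fin N, x ∈ S ↔ σ x ∈ T := by
    intro x
    have hz : z ∈ T := hT
    have hz0 : σ₀ z ∈ T := hσ₀S z hS
    constructor
    · intro hx
      have h1 : σ₀ x ∈ T := hσ₀S x hx
      simp only [hσdef, Equiv.trans_apply]
      rcases eq_or_ne (σ₀ x) (σ₀ z) with h | h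
      · rw [h, Equiv.swap_apply_left]; exact hz
      · rcases eq_or_ne (σ₀ x) z with h2 | h2
        · rw [h2, Equiv.swap_apply_right]; exact hz0
        · rw [Equiv.swap_apply_of_ne_of_ne h h2]; exact h1
    · intro hx
      by_contra hc
      have h1 : σ₀ x ∉ T := hσ₀Sc x hc
      simp only [hσdef, Equiv.trans_apply] at hx
      rcases eq_or_ne (σ₀ x) (σ₀ z) with h | h
      · rw [h, Equiv.swap_apply_left] at hx
        exact absurd (σ₀.injective h) (by rintro rfl; exact hc hS)
      · rcases eq_or_ne (σ₀ x) z with h2 | h2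
        · exact h1 (by rw [h2]; exact hz)
        · rw [Equiv.swap_apply_of_ne_of_ne h h2] at hx; exact h1 hx
  have himg : T.image σ.symm = S := by
    ext x
    simp only [Finset.mem_image]
    constructor
    · rintro ⟨w, hw, rfl⟩
      rw [hσS (σ.symm w), Equiv.apply_symm_apply]; exact hw
    · intro hx
      exact ⟨σ x, (hσS x).mp hx, by simp⟩
  rw [pComp_perm hN p σ hσz T, himg]

end Sym

section Count
variable {α : Type*} [Fintype α] [DecidableEq α]

lemma count_subsets (A : Finset α) (z : α) (hz : z ∈ A) (k : ℕ) (hk : 1 ≤ k) :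
    (Finset.univ.filter fun S : Finset α => S ⊆ A ∧ z ∈ S ∧ S.card = k).card
      = (A.card - 1).choose (k - 1) := by
  rw [← Finset.card_erase_of_mem hz, ← Finset.card_powersetCard]
  refine Finset.card_bij' (fun S _ => S.erase z) (fun T _ => insert z T) ?hi ?hj ?li ?ri
  case hi =>
    intro S hS
    simp only [Finset.mem_filter] at hS
    obtain ⟨-, hSA, hzS, hcard⟩ := hS
    rw [Finset.mem_powersetCard]
    constructor
    · intro x hx
      rw [Finset.mem_erase] at hx ⊢
      exact ⟨hx.1, hSA hx.2⟩
    · rw [Finset.card_erase_of_mem hzS, hcard]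
  case hj =>
    intro T hT
    rw [Finset.mem_powersetCard] at hT
    obtain ⟨hTA, hcard⟩ := hT
    have hzT : z ∉ T := fun h => (Finset.mem_erase.mp (hTA h)).1 rfl
    simp only [Finset.mem_filter, Finset.mem_univ, true_and]
    refine ⟨?_, Finset.mem_insert_self z T, ?_⟩
    · intro x hx
      rcases Finset.mem_insert.mp hx with rfl | hx
      · exact hz
      · exact (Finset.erase_subset z A) (hTA hx)
    · rw [Finset.card_insert_of_notMem hzT, hcard]
      omega
  case li =>
    intro S hS
    simp only [Finset.mem_filter] at hS
    exact Finset.insert_erase hS.2.2.1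
  case ri =>
    intro T hT
    rw [Finset.mem_powersetCard] at hT
    have hzT : z ∉ T := fun h => (Finset.mem_erase.mp (hT.1 h)).1 rfl
    exact Finset.erase_insert hzT

end Count

section Basic
variable (N : ℕ) (p : ℝ)

lemma bernWeight_eq (g : Fin N → Fin N → Bool) :
    bernWeight N p g = ∏ c : Fin N × Fin N, hW N p c (g c.1 c.2) := by
  rw [bernWeight, Fintype.prod_prod_type (f := fun c : Fin N × Fin N => hW N p c (g c.1 c.2))]
  rfl

lemma bernProb_eq (E : Set (Fin N → Fin N → Bool)) :
    bernProb N p E = ∑ g : Fin N → Fin N → Bool,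
      (if g ∈ E then bernWeight N p g else 0) := by
  rw [bernProb, tsum_fintype]
  congr 1

lemma total_mass : ∑ g : Fin N → Fin N → Bool,
    (∏ c : Fin N × Fin N, hW N p c (g c.1 c.2)) = 1 := by
  have hbij : Function.Bijective
      (fun g : Fin N → Fin N → Bool => (fun c : Fin N × Fin N => g c.1 c.2)) := by
    constructor
    · intro x y hxy
      funext u v
      exact congrFun hxy (u, v)
    · intro f
      exact ⟨fun u v => f (u, v), rfl⟩
  rw [Fintype.sum_bijective _ hbij _
    (fun f : Fin N × Fin N → Bool => ∏ c : Fin N × Fin N, hW N p c (f c)) (fun g => rfl)]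
  have h1 := Finset.prod_univ_sum (fun _ : Fin N × Fin N => (Finset.univ : Finset Bool))
      (fun c b => hW N p c b)
  rw [Fintype.piFinset_univ] at h1
  rw [← h1, Finset.prod_eq_one]
  intro c _
  rw [show ∑ b : Bool, hW N p c b = hW N p c true + hW N p c false from by
    simp [Fintype.sum_bool]]
  unfold hW; split <;> simp

end Basic

section Assembly
variable {N : ℕ} (hN : 0 < N) (p : ℝ)

lemma q_eq (k : ℕ) :
    bernQProb N hN p k
      = ∑ S ∈ Finset.univ.filter
          (fun S : Finset (Fin N) => (⟨0, hN⟩ : Fin N) ∈ S ∧ S.card = k),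
          pComp hN p S := by
  rw [bernQProb, bernProb_eq]
  unfold pComp
  rw [Finset.sum_comm]
  apply Finset.sum_congr rfl
  intro g _
  set S₀ : Finset (Fin N) := (bernOutComp N hN g).toFinset with hS₀def
  have hS₀ : bernOutComp N hN g = ↑S₀ := (Set.coe_toFinset _).symm
  simp only [Set.mem_setOf_eq, bernWeight_eq]
  by_cases h : (bernOutComp N hN g).ncard = k
  · rw [if_pos h]
    rw [Finset.sum_eq_single_of_mem S₀]
    · rw [if_pos hS₀]
    · simp only [Finset.mem_filter, Finset.mem_univ, true_and]
      refine ⟨Set.mem_toFinset.mpr (zero_mem_comp hN g), ?_⟩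
      rw [← h, hS₀, Set.ncard_coe_finset]
    · intro S _ hne
      rw [if_neg]
      intro hc
      exact hne (Finset.coe_injective (hc ▸ hS₀ ▸ rfl : (↑S₀ : Set (Fin N)) = ↑S).symm ▸ rfl)
  · rw [if_neg h]
    symm
    apply Finset.sum_eq_zero
    intro S hS
    simp only [Finset.mem_filter, Finset.mem_univ, true_and] at hS
    rw [if_neg]
    intro hc
    apply h
    rw [hc, Set.ncard_coe_finset, hS.2]

lemma pComp_value (k : ℕ) (hk : 1 ≤ k) (S : Finset (Fin N))
    (hzS : (⟨0, hN⟩ : Fin N) ∈ S) (hcard : S.card = k) :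
    (((N - 1).choose (k - 1) : ℝ)) * pComp hN p S = bernQProb N hN p k := by
  rw [q_eq hN p k]
  rw [Finset.sum_congr rfl (fun T hT => by
    simp only [Finset.mem_filter, Finset.mem_univ, true_and] at hT
    exact (pComp_eq_of_card hN p T S hT.1 hzS (by rw [hT.2, hcard])))]
  rw [Finset.sum_const, nsmul_eq_mul]
  congr 1
  have : (Finset.univ.filter
      (fun S : Finset (Fin N) => (⟨0, hN⟩ : Fin N) ∈ S ∧ S.card = k))
      = (Finset.univ.filter
      (fun S : Finset (Fin N) => S ⊆ Finset.univ ∧ (⟨0, hN⟩ : Fin N) ∈ S ∧ S.card = k)) := by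
    apply Finset.filter_congr
    intro S _
    simp [Finset.subset_univ]
  rw [this, count_subsets Finset.univ (⟨0, hN⟩ : Fin N) (Finset.mem_univ _) k hk]
  rw [Finset.card_univ, Fintype.card_fin]

end Assembly

theorem bernoulli_final_size_triangular_system
    (N : ℕ) (hN : 2 ≤ N) (p : ℝ) (hp0 : 0 ≤ p) (hp1 : p ≤ 1)
    (M : ℕ) (hM1 : 1 ≤ M) (hMN : M ≤ N) :
    (1 - p) ^ (M * (N - M)) =
      ∑ k ∈ Finset.Icc 1 M,
        bernQProb N (by omega) p k *
          (((M - 1).choose (k - 1) : ℝ) / ((N - 1).choose (k - 1) : ℝ)) *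
          (1 - p) ^ ((M - k) * (N - M)) := by
  have hNpos : 0 < N := by omega
  set z : Fin N := ⟨0, hNpos⟩ with hzdef
  obtain ⟨A, hzA', hAu, hAcard⟩ := Finset.exists_subsuperset_card_eq (n := M)
    (Finset.subset_univ {z}) (by simp [hM1])
    (by rw [Finset.card_univ, Fintype.card_fin]; exact hMN)
  have hzA : z ∈ A := hzA' (Finset.mem_singleton_self z)
  -- Step A : LHS is the probability of no edges from A to Aᶜ
  have stepA : (1 - p) ^ (M * (N - M)) =
      ∑ g : Fin N → Fin N → Bool,
        (if (∀ u v : Fin N, (u ∈ A ∧ v ∉ A) → g u v = false)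
          then ∏ c : Fin N × Fin N, hW N p c (g c.1 c.2) else 0) := by
    have h := cond_split N p (fun c : Fin N × Fin N => c.1 ∈ A ∧ c.2 ∉ A)
      (fun c hc he => hc.2 (he ▸ hc.1))
      (fun _ => True) (fun g g' _ => Iff.rfl)
    have hcard : Fintype.card {c : Fin N × Fin N // c.1 ∈ A ∧ c.2 ∉ A} = M * (N - M) := by
      rw [Fintype.card_subtype]
      rw [show Finset.univ.filter (fun c : Fin N × Fin N => c.1 ∈ A ∧ c.2 ∉ A) = A ×ˢ Aᶜ from by
        ext c; simp [Finset.mem_product]]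
      rw [Finset.card_product, Finset.card_compl, hAcard, Fintype.card_fin]
    rw [hcard] at h
    simp only [true_and, if_true] at h
    rw [total_mass N p, mul_one] at h
    exact h.symm
  -- Step B : pointwise decomposition over the component
  have stepB : ∀ g : Fin N → Fin N → Bool,
      (if (∀ u v : Fin N, (u ∈ A ∧ v ∉ A) → g u v = false)
        then ∏ c : Fin N × Fin N, hW N p c (g c.1 c.2) else 0)
      = ∑ S ∈ Finset.univ.filter (fun S : Finset (Fin N) => S ⊆ A ∧ z ∈ S),
          (if bernOutComp N hNpos g = ↑S ∧
              (∀ u v : Fin N, (u ∈ A ∧ u ∉ S ∧ v ∉ A) → g u v = false)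
            then ∏ c : Fin N × Fin N, hW N p c (g c.1 c.2) else 0) := by
    intro g
    set S₀ : Finset (Fin N) := (bernOutComp N hNpos g).toFinset with hS₀def
    have hS₀ : bernOutComp N hNpos g = ↑S₀ := (Set.coe_toFinset _).symm
    by_cases hE : ∀ u v : Fin N, (u ∈ A ∧ v ∉ A) → g u v = false
    · rw [if_pos hE]
      have hsub : bernOutComp N hNpos g ⊆ (↑A : Set (Fin N)) := by
        apply comp_subset hNpos (by exact_mod_cast hzA)
        intro u hu v hv
        exact hE u v ⟨by exact_mod_cast hu, by exact_mod_cast hv⟩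
      have hS₀A : S₀ ⊆ A := by
        intro x hx
        have : x ∈ bernOutComp N hNpos g := Set.mem_toFinset.mp hx
        exact_mod_cast hsub this
      have hmem : S₀ ∈ Finset.univ.filter (fun S : Finset (Fin N) => S ⊆ A ∧ z ∈ S) := by
        simp only [Finset.mem_filter, Finset.mem_univ, true_and]
        exact ⟨hS₀A, Set.mem_toFinset.mpr (zero_mem_comp hNpos g)⟩
      rw [Finset.sum_eq_single_of_mem S₀ hmem]
      · rw [if_pos ⟨hS₀, fun u v hc => hE u v ⟨hc.1, hc.2.2⟩⟩]
      · intro S _ hne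
        rw [if_neg]
        rintro ⟨hc, -⟩
        exact hne (Finset.coe_injective (hc ▸ hS₀ ▸ rfl : (↑S₀ : Set (Fin N)) = ↑S).symm ▸ rfl)
    · rw [if_neg hE]
      symm
      apply Finset.sum_eq_zero
      intro S hS
      simp only [Finset.mem_filter, Finset.mem_univ, true_and] at hS
      rw [if_neg]
      rintro ⟨hcomp, hno⟩
      apply hE
      intro u v ⟨huA, hvA⟩
      by_cases huS : u ∈ S
      · apply comp_no_out hNpos
        · rw [hcomp]; exact_mod_cast huS
        · rw [hcomp]
          intro hvS
          exact hvA (hS.1 (by exact_mod_cast hvS))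
      · exact hno u v ⟨huA, huS, hvA⟩
  -- Step C : for each S, split off the independent coordinates
  have stepC : ∀ S : Finset (Fin N), S ⊆ A → z ∈ S →
      (∑ g : Fin N → Fin N → Bool,
        (if bernOutComp N hNpos g = ↑S ∧
            (∀ u v : Fin N, (u ∈ A ∧ u ∉ S ∧ v ∉ A) → g u v = false)
          then ∏ c : Fin N × Fin N, hW N p c (g c.1 c.2) else 0))
      = (1 - p) ^ ((M - S.card) * (N - M)) * pComp hNpos p S := by
    intro S hSA hzS
    have h := cond_split N p (fun c : Fin N × Fin N => c.1 ∈ A ∧ c.1 ∉ S ∧ c.2 ∉ A)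
      (fun c hc he => hc.2.2 (he ▸ hc.1))
      (fun g => bernOutComp N hNpos g = ↑S)
      (fun g g' hagree => by
        have hag : ∀ u ∈ (↑S : Set (Fin N)), ∀ v, g u v = g' u v := by
          intro u hu v
          exact hagree u v (fun hq => hq.2.1 (by exact_mod_cast hu))
        constructor
        · intro hc
          exact comp_congr hNpos hc hag
        · intro hc
          exact comp_congr hNpos hc (fun u hu v => (hag u hu v).symm))
    have hcard : Fintype.card {c : Fin N × Fin N // c.1 ∈ A ∧ c.1 ∉ S ∧ c.2 ∉ A}
        = (M - S.card) * (N - M) := by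
      rw [Fintype.card_subtype]
      rw [show Finset.univ.filter
            (fun c : Fin N × Fin N => c.1 ∈ A ∧ c.1 ∉ S ∧ c.2 ∉ A) = (A \ S) ×ˢ Aᶜ from by
        ext c
        simp [Finset.mem_product, Finset.mem_sdiff, and_assoc]]
      rw [Finset.card_product, Finset.card_sdiff_of_subset hSA, Finset.card_compl, hAcard,
        Fintype.card_fin]
    rw [hcard] at h
    exact h
  -- assemble
  rw [stepA]
  rw [Finset.sum_congr rfl (fun g _ => stepB g)]
  rw [Finset.sum_comm]
  rw [Finset.sum_congr rfl (fun S hS => by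
    simp only [Finset.mem_filter, Finset.mem_univ, true_and] at hS
    exact stepC S hS.1 hS.2)]
  -- fiberwise grouping by cardinality
  rw [← Finset.sum_fiberwise_of_maps_to (g := fun S : Finset (Fin N) => S.card)
    (t := Finset.Icc 1 M)
    (fun S hS => by
      simp only [Finset.mem_filter, Finset.mem_univ, true_and] at hS
      rw [Finset.mem_Icc]
      exact ⟨Finset.card_pos.mpr ⟨z, hS.2⟩, le_trans (Finset.card_le_card hS.1) hAcard.le⟩)]
  apply Finset.sum_congr rfl
  intro k hk
  rw [Finset.mem_Icc] at hk
  have hCpos : (0:ℝ) < ((N - 1).choose (k - 1) : ℝ) := by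
    exact_mod_cast Nat.choose_pos (by omega)
  have hterm : ∀ S ∈ (Finset.univ.filter
      (fun S : Finset (Fin N) => S ⊆ A ∧ z ∈ S)).filter (fun S => S.card = k),
      (1 - p) ^ ((M - S.card) * (N - M)) * pComp hNpos p S
        = (1 - p) ^ ((M - k) * (N - M)) * (bernQProb N hNpos p k / ((N - 1).choose (k - 1) : ℝ)) := by
    intro S hS
    simp only [Finset.mem_filter, Finset.mem_univ, true_and] at hS
    obtain ⟨⟨hSA, hzS⟩, hcard⟩ := hS
    have hval := pComp_value hNpos p k hk.1 S hzS hcard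
    rw [hcard]
    congr 1
    field_simp
    linarith [hval]
  rw [Finset.sum_congr rfl hterm, Finset.sum_const, nsmul_eq_mul]
  have hcount : ((Finset.univ.filter
      (fun S : Finset (Fin N) => S ⊆ A ∧ z ∈ S)).filter (fun S => S.card = k)).card
      = (M - 1).choose (k - 1) := by
    rw [Finset.filter_filter]
    rw [Finset.filter_congr (fun S _ =>
      (show ((S ⊆ A ∧ z ∈ S) ∧ S.card = k) ↔ (S ⊆ A ∧ z ∈ S ∧ S.card = k) by tauto))]
    rw [count_subsets A z hzA k hk.1, hAcard]
  rw [hcount]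
  have hq : bernQProb N hNpos p k = bernQProb N (by omega : 0 < N) p k := rfl
  rw [hq]
  field_simp
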